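/- In the polyform model of Cl(2n) on S = ⋀ℂⁿ, R and R' are, up to a complex scalar, the only possible reality conditions: if T : S → S is a nonzero ℂ-antilinear map and there exists ε ∈ {1, −1} such that T ∘ Γ_A = ε · Γ_A ∘ T for all A ∈ {1, …, 2n}, then there exists z ∈ ℂ with T = z·R or T = z·R', where R := Γ₁ ∘ … ∘ Γ_n ∘ ∗ and R' := Γ_{n+1} ∘ … ∘ Γ_{2n} ∘ ∗. -/

import Mathlib

/-- The space of polyforms (spinors): the exterior algebra of `ℂⁿ`. -/
noncomputable abbrev Polyform (n : ℕ) := ExteriorAlgebra ℂ (Fin n → ℂ)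

/-- The creation operator `a_i`: wedging with the basis one-form `e_i`. -/
noncomputable def crea (n : ℕ) (i : Fin n) : Module.End ℂ (Polyform n) :=
  LinearMap.mulLeft ℂ (ExteriorAlgebra.ι ℂ (Pi.single i 1))

/-- The annihilation operator `a_i†`: interior product (left contraction) with the
`i`-th dual basis vector. -/
noncomputable def anni (n : ℕ) (i : Fin n) : Module.End ℂ (Polyform n) :=
  CliffordAlgebra.contractLeft (Q := (0 : QuadraticForm ℂ (Fin n → ℂ))) (LinearMap.proj i)

/-- The gamma operators: `Γ_i = a_i + a_i†` and `Γ_{i+n} = I•(a_i − a_i†)` (0-indexed). -/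
noncomputable def Gam (n : ℕ) (A : Fin (2 * n)) : Module.End ℂ (Polyform n) :=
  if h : (A : ℕ) < n then crea n ⟨A, h⟩ + anni n ⟨A, h⟩
  else Complex.I • (crea n ⟨(A : ℕ) - n, by have := A.isLt; omega⟩
    - anni n ⟨(A : ℕ) - n, by have := A.isLt; omega⟩)

/-- The basis polyform `e_{i₁} ∧ ⋯ ∧ e_{i_k}` indexed by a list of indices. -/
noncomputable def basisMonomial (n : ℕ) (l : List (Fin n)) : Polyform n :=
  (l.map fun i => ExteriorAlgebra.ι ℂ (Pi.single i (1 : ℂ))).prod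

/-- `st` is the complex conjugation `∗` on polyforms: the `ℂ`-antilinear involution fixing
each basis polyform and conjugating the complex coefficients. -/
def IsConjugation (n : ℕ) (st : Polyform n → Polyform n) : Prop :=
  (∀ x y, st (x + y) = st x + st y) ∧
  (∀ (z : ℂ) (x : Polyform n), st (z • x) = (starRingEnd ℂ) z • st x) ∧
  (∀ l : List (Fin n), st (basisMonomial n l) = basisMonomial n l)

/-- The antilinear operator `R := Γ₁ ∘ ⋯ ∘ Γ_n ∘ ∗`. -/
noncomputable def Rop (n : ℕ) (st : Polyform n → Polyform n) : Polyform n → Polyform n :=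
  fun ψ => (((List.finRange n).map fun i => Gam n (Fin.castLE (by omega) i)).prod) (st ψ)

/-- The antilinear operator `R' := Γ_{n+1} ∘ ⋯ ∘ Γ_{2n} ∘ ∗`. -/
noncomputable def Rop' (n : ℕ) (st : Polyform n → Polyform n) : Polyform n → Polyform n :=
  fun ψ =>
    (((List.finRange n).map fun i => Gam n ⟨n + i.1, by have := i.2; omega⟩).prod) (st ψ)





variable {n : ℕ}

lemma crea_apply (i : Fin n) (x : Polyform n) :
    crea n i x = ExteriorAlgebra.ι ℂ (Pi.single i 1) * x := rfl

lemma anni_one (i : Fin n) : anni n i (1 : Polyform n) = 0 :=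
  CliffordAlgebra.contractLeft_one _ _

lemma anni_crea (i j : Fin n) (x : Polyform n) :
    anni n i (crea n j x) = (if i = j then (1:ℂ) else 0) • x - crea n j (anni n i x) := by
  rw [crea_apply, anni, CliffordAlgebra.contractLeft_ι_mul]
  congr 1
  congr 1
  simp [LinearMap.proj_apply, Pi.single_apply]

lemma crea_crea (i j : Fin n) (x : Polyform n) :
    crea n i (crea n j x) = -(crea n j (crea n i x)) := by
  rw [crea_apply, crea_apply, crea_apply, crea_apply, ← mul_assoc, ← mul_assoc,
    CliffordAlgebra.ι_mul_ι_comm_of_isOrtho (QuadraticMap.IsOrtho.all _ _), neg_mul]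

lemma anni_anni (i j : Fin n) (x : Polyform n) :
    anni n i (anni n j x) = -(anni n j (anni n i x)) :=
  CliffordAlgebra.contractLeft_comm _ _ _

lemma anni_anni_self (i : Fin n) (x : Polyform n) :
    anni n i (anni n i x) = 0 :=
  CliffordAlgebra.contractLeft_contractLeft _ _

-- End versions
lemma F_cc (i j : Fin n) : crea n i * crea n j = -(crea n j * crea n i) :=
  LinearMap.ext fun x => crea_crea i j x

lemma F_cc0 (i : Fin n) : crea n i * crea n i = 0 :=
  LinearMap.ext fun x => by
    show crea n i (crea n i x) = 0
    rw [crea_apply, crea_apply, ← mul_assoc, ExteriorAlgebra.ι_sq_zero, zero_mul]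

lemma F_dd (i j : Fin n) : anni n i * anni n j = -(anni n j * anni n i) :=
  LinearMap.ext fun x => anni_anni i j x

lemma F_dd0 (i : Fin n) : anni n i * anni n i = 0 :=
  LinearMap.ext fun x => anni_anni_self i x

lemma F_dc (i j : Fin n) : anni n i * crea n j + crea n j * anni n i
    = (if i = j then (1:ℂ) else 0) • (1 : Module.End ℂ (Polyform n)) :=
  LinearMap.ext fun x => by
    simp only [Module.End.mul_apply, LinearMap.add_apply, anni_crea, LinearMap.smul_apply,
      Module.End.one_apply, sub_add_cancel]

lemma F_dc_same (i : Fin n) :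
    anni n i * crea n i + crea n i * anni n i = (1 : Module.End ℂ (Polyform n)) := by
  rw [F_dc]; simp

lemma F_dc_ne (i j : Fin n) (h : i ≠ j) :
    anni n i * crea n j = -(crea n j * anni n i) := by
  have := F_dc i j
  rw [if_neg h, zero_smul] at this
  exact eq_neg_of_add_eq_zero_left this



variable {n : ℕ}

def lo (i : Fin n) : Fin (2 * n) := ⟨i.1, by have := i.2; omega⟩
def hi (i : Fin n) : Fin (2 * n) := ⟨n + i.1, by have := i.2; omega⟩

lemma Gam_lo (i : Fin n) : Gam n (lo i) = crea n i + anni n i := by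
  have h : ((lo i : Fin (2*n)) : ℕ) < n := i.2
  rw [Gam, dif_pos h]
  have : (⟨(lo i : ℕ), h⟩ : Fin n) = i := Fin.ext rfl
  rw [this]

lemma Gam_hi (i : Fin n) : Gam n (hi i) = Complex.I • (crea n i - anni n i) := by
  have h : ¬ ((hi i : Fin (2*n)) : ℕ) < n := by simp [hi]
  rw [Gam, dif_neg h]
  have : (⟨((hi i : Fin (2*n)) : ℕ) - n, by have := (hi i).isLt; omega⟩ : Fin n) = i := by
    apply Fin.ext
    show n + i.1 - n = i.1
    omega
  rw [this]

lemma lo_or_hi (A : Fin (2 * n)) : (∃ i, A = lo i) ∨ (∃ i, A = hi i) := by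
  by_cases h : (A : ℕ) < n
  · exact Or.inl ⟨⟨A, h⟩, Fin.ext rfl⟩
  · refine Or.inr ⟨⟨(A : ℕ) - n, by have := A.isLt; omega⟩, Fin.ext ?_⟩
    show (A : ℕ) = n + ((A : ℕ) - n)
    omega

lemma lo_inj : Function.Injective (lo (n := n)) := fun i j h => Fin.ext (by
  have := congrArg Fin.val h; simpa [lo] using this)

lemma hi_inj : Function.Injective (hi (n := n)) := fun i j h => Fin.ext (by
  have := congrArg Fin.val h; simpa [hi] using this)

lemma lo_ne_hi (i j : Fin n) : lo i ≠ hi j := by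
  intro h
  have := congrArg Fin.val h
  simp only [lo, hi] at this
  omega

section AC
variable {E : Type*} [Ring E] [Algebra ℂ E]

/-- anticommute -/
def ACr (X Y : E) : Prop := X * Y = -(Y * X)

lemma ACr.symm' {X Y : E} (h : ACr X Y) : ACr Y X := by
  unfold ACr at *; rw [h]; abel

lemma ACr.add_right {X Y Z : E} (h1 : ACr X Y) (h2 : ACr X Z) : ACr X (Y + Z) := by
  unfold ACr at *; rw [mul_add, add_mul, h1, h2]; abel

lemma ACr.sub_right {X Y Z : E} (h1 : ACr X Y) (h2 : ACr X Z) : ACr X (Y - Z) := by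
  unfold ACr at *; rw [mul_sub, sub_mul, h1, h2]; abel

lemma ACr.smul_right {X Y : E} (z : ℂ) (h : ACr X Y) : ACr X (z • Y) := by
  unfold ACr at *
  rw [mul_smul_comm, smul_mul_assoc, h, smul_neg]

lemma ACr.add_left {X Y Z : E} (h1 : ACr X Z) (h2 : ACr Y Z) : ACr (X + Y) Z :=
  ((h1.symm').add_right (h2.symm')).symm'

lemma ACr.sub_left {X Y Z : E} (h1 : ACr X Z) (h2 : ACr Y Z) : ACr (X - Y) Z :=
  ((h1.symm').sub_right (h2.symm')).symm'

lemma ACr.smul_left {X Y : E} (z : ℂ) (h : ACr X Y) : ACr (z • X) Y :=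
  ((h.symm').smul_right z).symm'

end AC

lemma AC_cc (i j : Fin n) : ACr (crea n i) (crea n j) := F_cc i j
lemma AC_dd (i j : Fin n) : ACr (anni n i) (anni n j) := F_dd i j
lemma AC_dc (i j : Fin n) (h : i ≠ j) : ACr (anni n i) (crea n j) := F_dc_ne i j h
lemma AC_cd (i j : Fin n) (h : i ≠ j) : ACr (crea n i) (anni n j) :=
  (AC_dc j i h.symm).symm'

/-- same-index mixed anticommutation -/
lemma AC_pm (i : Fin n) : ACr (crea n i + anni n i) (crea n i - anni n i) := by
  unfold ACr
  have e1 : (crea n i + anni n i) * (crea n i - anni n i)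
      = anni n i * crea n i - crea n i * anni n i := by
    rw [add_mul, mul_sub, mul_sub]
    rw [F_cc0, F_dd0]
    abel
  have e2 : (crea n i - anni n i) * (crea n i + anni n i)
      = crea n i * anni n i - anni n i * crea n i := by
    rw [sub_mul, mul_add, mul_add]
    rw [F_cc0, F_dd0]
    abel
  rw [e1, e2]; abel

lemma Gam_anticomm {A B : Fin (2 * n)} (h : A ≠ B) : ACr (Gam n A) (Gam n B) := by
  rcases lo_or_hi A with ⟨i, rfl⟩ | ⟨i, rfl⟩ <;> rcases lo_or_hi B with ⟨j, rfl⟩ | ⟨j, rfl⟩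
  · have hij : i ≠ j := fun e => h (by rw [e])
    rw [Gam_lo, Gam_lo]
    exact ((AC_cc i j).add_left (AC_dc i j hij)).add_right
      ((AC_cd i j hij).add_left (AC_dd i j))
  · rw [Gam_lo, Gam_hi]
    by_cases hij : i = j
    · subst hij
      exact (AC_pm i).smul_right _
    · exact (((AC_cc i j).sub_right (AC_cd i j hij)).add_left
        ((AC_dc i j hij).sub_right (AC_dd i j))).smul_right _
  · rw [Gam_hi, Gam_lo]
    by_cases hij : i = j
    · subst hij
      exact ((AC_pm i).symm').smul_left _
    · exact ((((AC_cc i j).add_right (AC_cd i j hij)).sub_left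
        ((AC_dc i j hij).add_right (AC_dd i j)))).smul_left _
  · have hij : i ≠ j := fun e => h (by rw [e])
    rw [Gam_hi, Gam_hi]
    exact ((((AC_cc i j).sub_right (AC_cd i j hij)).sub_left
      ((AC_dc i j hij).sub_right (AC_dd i j))).smul_right _).smul_left _

lemma Gam_sq (A : Fin (2 * n)) : Gam n A * Gam n A = 1 := by
  rcases lo_or_hi A with ⟨i, rfl⟩ | ⟨i, rfl⟩
  · rw [Gam_lo, add_mul, mul_add, mul_add, F_cc0, F_dd0, zero_add, add_zero,
      add_comm, F_dc_same]
  · rw [Gam_hi, smul_mul_smul_comm, Complex.I_mul_I, sub_mul, mul_sub, mul_sub,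
      F_cc0, F_dd0]
    have : (0 : Module.End ℂ (Polyform n)) - crea n i * anni n i
        - (anni n i * crea n i - 0) = -(anni n i * crea n i + crea n i * anni n i) := by abel
    rw [this, F_dc_same]; simp


lemma basisMonomial_nil : basisMonomial n [] = 1 := rfl

lemma basisMonomial_cons (i : Fin n) (l : List (Fin n)) :
    basisMonomial n (i :: l) = crea n i (basisMonomial n l) := by
  rw [basisMonomial, List.map_cons, List.prod_cons, crea_apply, basisMonomial]

lemma basisMonomial_append (l l' : List (Fin n)) :
    basisMonomial n (l ++ l') = basisMonomial n l * basisMonomial n l' := by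
  rw [basisMonomial, List.map_append, List.prod_append, basisMonomial, basisMonomial]

/-- monomials span everything -/
lemma span_monomials : Submodule.span ℂ (Set.range (basisMonomial n)) = ⊤ := by
  rw [eq_top_iff]
  rintro x -
  have mono_mem : ∀ l, basisMonomial n l ∈ Submodule.span ℂ (Set.range (basisMonomial n)) :=
    fun l => Submodule.subset_span ⟨l, rfl⟩
  induction x using CliffordAlgebra.induction with
  | algebraMap r =>
    rw [Algebra.algebraMap_eq_smul_one]
    exact Submodule.smul_mem _ _ (by simpa [basisMonomial_nil] using mono_mem [])
  | ι v =>
    have hv : v = ∑ i : Fin n, v i • (Pi.single i 1 : Fin n → ℂ) := by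
      ext j; simp [Pi.single_apply]
    rw [hv, map_sum]
    refine Submodule.sum_mem _ fun i _ => ?_
    rw [map_smul]
    refine Submodule.smul_mem _ _ ?_
    simpa [basisMonomial] using mono_mem [i]
  | mul a b ha hb =>
    -- show span * span ⊆ span
    induction ha using Submodule.span_induction with
    | mem x hx =>
      obtain ⟨l, rfl⟩ := hx
      induction hb using Submodule.span_induction with
      | mem y hy =>
        obtain ⟨l', rfl⟩ := hy
        rw [← basisMonomial_append]; exact mono_mem _
      | zero => rw [mul_zero]; exact Submodule.zero_mem _
      | add y z _ _ h1 h2 => rw [mul_add]; exact Submodule.add_mem _ h1 h2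
      | smul a y _ h1 => rw [mul_smul_comm]; exact Submodule.smul_mem _ _ h1
    | zero => rw [zero_mul]; exact Submodule.zero_mem _
    | add x y _ _ h1 h2 => rw [add_mul]; exact Submodule.add_mem _ h1 h2
    | smul a x _ h1 => rw [smul_mul_assoc]; exact Submodule.smul_mem _ _ h1
  | add a b ha hb => exact Submodule.add_mem _ ha hb

section Lists
open List

lemma prodGam_mul_of_not_mem (L : List (Fin (2*n))) {A : Fin (2*n)} (h : ∀ B ∈ L, B ≠ A) :
    (L.map (Gam n)).prod * Gam n A = ((-1 : ℂ) ^ L.length) • (Gam n A * (L.map (Gam n)).prod) := by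
  induction L with
  | nil => simp
  | cons B L ih =>
    have hB : B ≠ A := h B (List.mem_cons_self)
    have hL : ∀ C ∈ L, C ≠ A := fun C hC => h C (List.mem_cons_of_mem _ hC)
    rw [List.map_cons, List.prod_cons, mul_assoc, ih hL, mul_smul_comm, ← mul_assoc,
      Gam_anticomm hB, neg_mul (α := Module.End ℂ (Polyform n)), mul_assoc, smul_neg, ← neg_smul]
    rw [List.length_cons, pow_succ]
    congr 1
    ring

lemma prodGam_mul_of_mem (L : List (Fin (2*n))) {A : Fin (2*n)} (hnd : L.Nodup) (hA : A ∈ L) :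
    (L.map (Gam n)).prod * Gam n A
      = (-(-1 : ℂ) ^ L.length) • (Gam n A * (L.map (Gam n)).prod) := by
  induction L with
  | nil => simp at hA
  | cons B L ih =>
    rw [List.nodup_cons] at hnd
    rw [List.map_cons, List.prod_cons, mul_assoc]
    rcases List.mem_cons.mp hA with rfl | hA'
    · have hL : ∀ C ∈ L, C ≠ A := fun C hC e => hnd.1 (e ▸ hC)
      rw [prodGam_mul_of_not_mem L hL, mul_smul_comm, ← mul_assoc, Gam_sq, one_mul]
      congr 1
      rw [List.length_cons, pow_succ]
      ring
    · have hBA : B ≠ A := fun e => hnd.1 (e ▸ hA')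
      rw [ih hnd.2 hA', mul_smul_comm, ← mul_assoc, Gam_anticomm hBA, neg_mul (α := Module.End ℂ (Polyform n)), mul_assoc,
        smul_neg, ← neg_smul, List.length_cons, pow_succ]
      congr 1
      ring

lemma prodCrea_mul_of_not_mem (L : List (Fin n)) {j : Fin n} (h : j ∉ L) :
    (L.map (crea n)).prod * crea n j
      = ((-1 : ℂ) ^ L.length) • (crea n j * (L.map (crea n)).prod) := by
  induction L with
  | nil => simp
  | cons i L ih =>
    have hij : j ∉ L := fun hm => h (List.mem_cons_of_mem _ hm)
    rw [List.map_cons, List.prod_cons, mul_assoc, ih hij, mul_smul_comm, ← mul_assoc,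
      F_cc i j, neg_mul (α := Module.End ℂ (Polyform n)), mul_assoc, smul_neg, ← neg_smul]
    congr 1
    rw [List.length_cons, pow_succ]
    ring

lemma prodCrea_mul_of_mem (L : List (Fin n)) {j : Fin n} (h : j ∈ L) :
    (L.map (crea n)).prod * crea n j = 0 := by
  induction L with
  | nil => simp at h
  | cons i L ih =>
    rw [List.map_cons, List.prod_cons, mul_assoc]
    by_cases hj : j ∈ L
    · rw [ih hj, mul_zero]
    · have : i = j := by rcases List.mem_cons.mp h with e | e; exact e.symm; exact absurd e hj
      subst this
      rw [prodCrea_mul_of_not_mem L hj, mul_smul_comm, ← mul_assoc, F_cc0, zero_mul,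
        smul_zero]

lemma prodCrea_one (l : List (Fin n)) :
    ((l.map (crea n)).prod) (1 : Polyform n) = basisMonomial n l := by
  induction l with
  | nil => simp [basisMonomial_nil]
  | cons i l ih =>
    rw [List.map_cons, List.prod_cons, Module.End.mul_apply, ih, basisMonomial_cons]

end Lists

/-- kernel of all creation operators: reconstruction formula -/
lemma ker_reconstruct : ∀ (L : List (Fin n)), L.Nodup → ∀ x : Polyform n,
    (∀ i ∈ L, crea n i x = 0) →
    x = ((L.map (crea n)).prod) (((L.reverse.map (anni n)).prod) x) := by
  intro L
  induction L with
  | nil => intro _ x _; simp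
  | cons i L ih =>
    intro hnd x hx
    rw [List.nodup_cons] at hnd
    have hci : crea n i x = 0 := hx i (List.mem_cons_self)
    have hx' : x = crea n i (anni n i x) := by
      have := congrArg (fun f : Module.End ℂ (Polyform n) => f x) (F_dc_same i)
      simp only [LinearMap.add_apply, Module.End.mul_apply, Module.End.one_apply] at this
      rw [hci, map_zero, zero_add] at this
      exact this.symm
    set y := anni n i x with hy
    have hcy : ∀ j ∈ L, crea n j y = 0 := by
      intro j hj
      have hij : i ≠ j := fun e => hnd.1 (e ▸ hj)
      have := congrArg (fun f : Module.End ℂ (Polyform n) => f x) (F_dc_ne i j hij)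
      simp only [Module.End.mul_apply, LinearMap.neg_apply] at this
      have hcj : crea n j x = 0 := hx j (List.mem_cons_of_mem _ hj)
      rw [hcj, map_zero] at this
      exact neg_eq_zero.mp this.symm
    have hrec := ih hnd.2 y hcy
    calc x = crea n i y := hx'
    _ = crea n i (((L.map (crea n)).prod) (((L.reverse.map (anni n)).prod) y)) := by
        rw [← hrec]
    _ = (((i :: L).map (crea n)).prod) ((((i :: L).reverse.map (anni n)).prod) x) := by
        rw [List.map_cons, List.prod_cons, List.reverse_cons, List.map_append,
          List.prod_append, Module.End.mul_apply]
        simp only [List.map_cons, List.map_nil, List.prod_cons, List.prod_nil,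
          Module.End.mul_apply, mul_one, Module.End.one_apply]
        rfl

/-- anything in the range of the full creation product is a multiple of the top monomial -/
lemma range_topline (y : Polyform n) :
    ∃ z : ℂ, (((List.finRange n).map (crea n)).prod) y
      = z • basisMonomial n (List.finRange n) := by
  have hy : y ∈ Submodule.span ℂ (Set.range (basisMonomial n)) := by
    rw [span_monomials]; trivial
  induction hy using Submodule.span_induction with
  | mem x hx =>
    obtain ⟨l, rfl⟩ := hx
    cases l with
    | nil =>
      exact ⟨1, by rw [basisMonomial_nil, prodCrea_one, one_smul]⟩
    | cons j l' =>
      refine ⟨0, ?_⟩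
      rw [basisMonomial_cons, zero_smul, ← Module.End.mul_apply,
        prodCrea_mul_of_mem _ (List.mem_finRange j), LinearMap.zero_apply]
  | zero => exact ⟨0, by simp⟩
  | add a b _ _ h1 h2 =>
    obtain ⟨z1, h1⟩ := h1; obtain ⟨z2, h2⟩ := h2
    exact ⟨z1 + z2, by rw [map_add, h1, h2, add_smul]⟩
  | smul a x _ h1 =>
    obtain ⟨z1, h1⟩ := h1
    exact ⟨a * z1, by rw [map_smul, h1, smul_smul]⟩


section ST
variable {st : Polyform n → Polyform n} (hst : IsConjugation n st)
include hst

lemma st_zero : st 0 = 0 := by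
  have := hst.1 0 0
  rw [add_zero] at this
  exact left_eq_add.mp this

lemma st_one : st 1 = 1 := by
  have := hst.2.2 []
  rwa [basisMonomial_nil] at this

lemma st_smul_real (r : ℝ) (x : Polyform n) : st ((r : ℂ) • x) = (r : ℂ) • st x := by
  rw [hst.2.1, Complex.conj_ofReal]

lemma st_crea (i : Fin n) (x : Polyform n) : st (crea n i x) = crea n i (st x) := by
  have hx : x ∈ Submodule.span ℂ (Set.range (basisMonomial n)) := by
    rw [span_monomials]; trivial
  induction hx using Submodule.span_induction with
  | mem y hy =>
    obtain ⟨l, rfl⟩ := hy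
    rw [← basisMonomial_cons, hst.2.2, hst.2.2, basisMonomial_cons]
  | zero => rw [map_zero, st_zero hst, map_zero]
  | add a b _ _ h1 h2 => rw [map_add, hst.1, hst.1, h1, h2, map_add]
  | smul a y _ h1 => rw [map_smul, hst.2.1, hst.2.1, h1, map_smul]

lemma st_anni_mono (i : Fin n) (l : List (Fin n)) :
    st (anni n i (basisMonomial n l)) = anni n i (basisMonomial n l) := by
  induction l with
  | nil => rw [basisMonomial_nil, anni_one, st_zero hst]
  | cons j l ih =>
    rw [basisMonomial_cons, anni_crea]
    rw [sub_eq_add_neg, hst.1]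
    congr 1
    · by_cases h : i = j
      · simp only [if_pos h, one_smul]
        exact hst.2.2 l
      · simp only [if_neg h, zero_smul]
        exact st_zero hst
    · have : -(crea n j (anni n i (basisMonomial n l)))
          = ((-1 : ℂ)) • (crea n j (anni n i (basisMonomial n l))) := by
        rw [neg_one_smul]
      rw [this, hst.2.1, st_crea hst, ih]
      simp

lemma st_anni (i : Fin n) (x : Polyform n) : st (anni n i x) = anni n i (st x) := by
  have hx : x ∈ Submodule.span ℂ (Set.range (basisMonomial n)) := by
    rw [span_monomials]; trivial
  induction hx using Submodule.span_induction with
  | mem y hy =>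
    obtain ⟨l, rfl⟩ := hy
    rw [st_anni_mono hst, hst.2.2]
  | zero => rw [map_zero, st_zero hst, map_zero]
  | add a b _ _ h1 h2 => rw [map_add, hst.1, hst.1, h1, h2, map_add]
  | smul a y _ h1 => rw [map_smul, hst.2.1, hst.2.1, h1, map_smul]

lemma st_Gam_lo (i : Fin n) (x : Polyform n) :
    st (Gam n (lo i) x) = Gam n (lo i) (st x) := by
  rw [Gam_lo, LinearMap.add_apply, LinearMap.add_apply, hst.1, st_crea hst, st_anni hst]

lemma st_Gam_hi (i : Fin n) (x : Polyform n) :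
    st (Gam n (hi i) x) = -(Gam n (hi i) (st x)) := by
  rw [Gam_hi, LinearMap.smul_apply, LinearMap.smul_apply, hst.2.1, Complex.conj_I,
    LinearMap.sub_apply, LinearMap.sub_apply, sub_eq_add_neg, hst.1, st_crea hst]
  have : st (-(anni n i x)) = -(anni n i (st x)) := by
    rw [← neg_one_smul ℂ (anni n i x), hst.2.1, st_anni hst]
    simp
  rw [this, neg_smul, ← sub_eq_add_neg]

end ST

section Anti
variable (T : Polyform n → Polyform n)
  (hadd : ∀ x y, T (x + y) = T x + T y)
  (hsmul : ∀ (z : ℂ) (x : Polyform n), T (z • x) = (starRingEnd ℂ) z • T x)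

include hadd in
lemma anti_zero : T 0 = 0 := by
  have := hadd 0 0
  rw [add_zero] at this
  exact left_eq_add.mp this

include hadd hsmul in
lemma derive_cd (e : ℂ) (hTG : ∀ (A : Fin (2 * n)) (ψ : Polyform n),
      T (Gam n A ψ) = e • Gam n A (T ψ)) (i : Fin n) (ψ : Polyform n) :
    T (crea n i ψ) = e • anni n i (T ψ) ∧ T (anni n i ψ) = e • crea n i (T ψ) := by
  have h1 := hTG (lo i) ψ
  have h2 := hTG (hi i) ψ
  rw [Gam_lo] at h1
  rw [Gam_hi] at h2
  simp only [LinearMap.add_apply, LinearMap.sub_apply, LinearMap.smul_apply] at h1 h2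
  rw [hsmul, Complex.conj_I] at h2
  have h2' : T (crea n i ψ - anni n i ψ)
      = (-e) • (crea n i (T ψ) - anni n i (T ψ)) := by
    have h3 := congrArg (fun v => Complex.I • v) h2
    simp only [smul_smul] at h3
    rw [show Complex.I * -Complex.I = 1 by rw [mul_neg, Complex.I_mul_I, neg_neg],
      one_smul, show Complex.I * (e * Complex.I) = -e by
        rw [mul_comm e, ← mul_assoc, Complex.I_mul_I, neg_one_mul]] at h3
    exact h3
  constructor
  · have hsum : T (crea n i ψ) + T (crea n i ψ)
        = (e • anni n i (T ψ)) + (e • anni n i (T ψ)) := by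
      calc T (crea n i ψ) + T (crea n i ψ)
          = T (crea n i ψ + crea n i ψ) := (hadd _ _).symm
        _ = T ((crea n i ψ + anni n i ψ) + (crea n i ψ - anni n i ψ)) := by
            rw [add_add_sub_cancel]
        _ = T (crea n i ψ + anni n i ψ) + T (crea n i ψ - anni n i ψ) := hadd _ _
        _ = e • (crea n i (T ψ) + anni n i (T ψ))
            + (-e) • (crea n i (T ψ) - anni n i (T ψ)) := by rw [h1, h2']
        _ = (e • anni n i (T ψ)) + (e • anni n i (T ψ)) := by module
    have h2s : (2 : ℂ) • T (crea n i ψ) = (2 : ℂ) • (e • anni n i (T ψ)) := by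
      rw [two_smul, two_smul]; exact hsum
    exact smul_right_injective _ two_ne_zero h2s
  · have hsub : ∀ x y, T (x - y) = T x - T y := by
      intro x y
      have hneg : T (-y) = -(T y) := by
        rw [← neg_one_smul ℂ y, hsmul]; simp
      rw [sub_eq_add_neg, hadd, hneg, ← sub_eq_add_neg]
    have hsum : T (anni n i ψ) + T (anni n i ψ)
        = (e • crea n i (T ψ)) + (e • crea n i (T ψ)) := by
      calc T (anni n i ψ) + T (anni n i ψ)
          = T (anni n i ψ + anni n i ψ) := (hadd _ _).symm
        _ = T ((crea n i ψ + anni n i ψ) - (crea n i ψ - anni n i ψ)) := by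
            congr 1
            abel
        _ = T (crea n i ψ + anni n i ψ) - T (crea n i ψ - anni n i ψ) := hsub _ _
        _ = e • (crea n i (T ψ) + anni n i (T ψ))
            - (-e) • (crea n i (T ψ) - anni n i (T ψ)) := by rw [h1, h2']
        _ = (e • crea n i (T ψ)) + (e • crea n i (T ψ)) := by module
    have h2s : (2 : ℂ) • T (anni n i ψ) = (2 : ℂ) • (e • crea n i (T ψ)) := by
      rw [two_smul, two_smul]; exact hsum
    exact smul_right_injective _ two_ne_zero h2s

include hadd hsmul in
lemma keyA (e : ℂ) (hc : ∀ (i : Fin n) (ψ : Polyform n),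
      T (crea n i ψ) = e • anni n i (T ψ)) (l : List (Fin n)) :
    T (basisMonomial n l) = e ^ l.length • ((l.map (anni n)).prod) (T 1) := by
  induction l with
  | nil => rw [basisMonomial_nil]; simp
  | cons i l ih =>
    rw [basisMonomial_cons, hc, ih, map_smul, List.map_cons, List.prod_cons,
      Module.End.mul_apply, smul_smul, List.length_cons, pow_succ, mul_comm]

end Anti

lemma anti_ext (T T' : Polyform n → Polyform n)
    (hadd : ∀ x y, T (x + y) = T x + T y)
    (hsmul : ∀ (z : ℂ) (x : Polyform n), T (z • x) = (starRingEnd ℂ) z • T x)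
    (hadd' : ∀ x y, T' (x + y) = T' x + T' y)
    (hsmul' : ∀ (z : ℂ) (x : Polyform n), T' (z • x) = (starRingEnd ℂ) z • T' x)
    (h : ∀ l, T (basisMonomial n l) = T' (basisMonomial n l)) : T = T' := by
  funext x
  have hx : x ∈ Submodule.span ℂ (Set.range (basisMonomial n)) := by
    rw [span_monomials]; trivial
  induction hx using Submodule.span_induction with
  | mem y hy => obtain ⟨l, rfl⟩ := hy; exact h l
  | zero => rw [anti_zero T hadd, anti_zero T' hadd']
  | add a b _ _ h1 h2 => rw [hadd, hadd', h1, h2]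
  | smul a y _ h1 => rw [hsmul, hsmul', h1]



lemma anni_mono_notmem (i : Fin n) (l : List (Fin n)) (h : i ∉ l) :
    anni n i (basisMonomial n l) = 0 := by
  induction l with
  | nil => rw [basisMonomial_nil, anni_one]
  | cons j l ih =>
    have hij : i ≠ j := fun e => h (e ▸ List.mem_cons_self)
    have hil : i ∉ l := fun e => h (List.mem_cons_of_mem _ e)
    rw [basisMonomial_cons, anni_crea, if_neg hij, zero_smul, zero_sub, ih hil,
      map_zero, neg_zero]

lemma GamLo_prod_one (l : List (Fin n)) (hnd : l.Nodup) :
    ((l.map fun i => Gam n (lo i)).prod) (1 : Polyform n) = basisMonomial n l := by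
  induction l with
  | nil => simp [basisMonomial_nil]
  | cons i l ih =>
    rw [List.nodup_cons] at hnd
    rw [List.map_cons, List.prod_cons, Module.End.mul_apply, ih hnd.2, Gam_lo,
      LinearMap.add_apply, anni_mono_notmem i l hnd.1, add_zero, basisMonomial_cons]

lemma GamHi_prod_one (l : List (Fin n)) (hnd : l.Nodup) :
    ((l.map fun i => Gam n (hi i)).prod) (1 : Polyform n)
      = (Complex.I ^ l.length) • basisMonomial n l := by
  induction l with
  | nil => simp [basisMonomial_nil]
  | cons i l ih =>
    rw [List.nodup_cons] at hnd
    rw [List.map_cons, List.prod_cons, Module.End.mul_apply, ih hnd.2, map_smul, Gam_hi,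
      LinearMap.smul_apply, LinearMap.sub_apply, anni_mono_notmem i l hnd.1, sub_zero,
      ← basisMonomial_cons, smul_smul]
    simp [pow_succ]

section RopFacts
variable {st : Polyform n → Polyform n} (hst : IsConjugation n st)

lemma Rop_eq (ψ : Polyform n) :
    Rop n st ψ = ((((List.finRange n).map lo).map (Gam n)).prod) (st ψ) := by
  rw [Rop, List.map_map]
  rfl

lemma Rop'_eq (ψ : Polyform n) :
    Rop' n st ψ = ((((List.finRange n).map hi).map (Gam n)).prod) (st ψ) := by
  rw [Rop', List.map_map]
  rfl

lemma loL_nodup : (((List.finRange n).map lo)).Nodup :=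
  (List.nodup_finRange n).map lo_inj

lemma hiL_nodup : (((List.finRange n).map hi)).Nodup :=
  (List.nodup_finRange n).map hi_inj

lemma loL_length : ((List.finRange n).map lo).length = n := by simp

lemma hiL_length : ((List.finRange n).map hi).length = n := by simp

include hst in
lemma Rop_add (x y : Polyform n) : Rop n st (x + y) = Rop n st x + Rop n st y := by
  rw [Rop_eq, Rop_eq, Rop_eq, hst.1, map_add]

include hst in
lemma Rop_smul (z : ℂ) (x : Polyform n) :
    Rop n st (z • x) = (starRingEnd ℂ) z • Rop n st x := by
  rw [Rop_eq, Rop_eq, hst.2.1, map_smul]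

include hst in
lemma Rop'_add (x y : Polyform n) : Rop' n st (x + y) = Rop' n st x + Rop' n st y := by
  rw [Rop'_eq, Rop'_eq, Rop'_eq, hst.1, map_add]

include hst in
lemma Rop'_smul (z : ℂ) (x : Polyform n) :
    Rop' n st (z • x) = (starRingEnd ℂ) z • Rop' n st x := by
  rw [Rop'_eq, Rop'_eq, hst.2.1, map_smul]

include hst in
lemma Rop_Gam (A : Fin (2 * n)) (ψ : Polyform n) :
    Rop n st (Gam n A ψ) = (-(-1 : ℂ) ^ n) • Gam n A (Rop n st ψ) := by
  rcases lo_or_hi A with ⟨i, rfl⟩ | ⟨i, rfl⟩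
  · rw [Rop_eq, st_Gam_lo hst, ← Module.End.mul_apply,
      prodGam_mul_of_mem _ loL_nodup (List.mem_map_of_mem (f := lo) (List.mem_finRange i)),
      loL_length, LinearMap.smul_apply, Module.End.mul_apply, Rop_eq]
  · have hnm : ∀ B ∈ (List.finRange n).map lo, B ≠ hi i := by
      intro B hB
      obtain ⟨j, -, rfl⟩ := List.mem_map.mp hB
      exact lo_ne_hi j i
    rw [Rop_eq, st_Gam_hi hst, map_neg, ← Module.End.mul_apply,
      prodGam_mul_of_not_mem _ hnm, loL_length, LinearMap.smul_apply,
      Module.End.mul_apply, ← Rop_eq (st := st), neg_smul]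

include hst in
lemma Rop'_Gam (A : Fin (2 * n)) (ψ : Polyform n) :
    Rop' n st (Gam n A ψ) = ((-1 : ℂ) ^ n) • Gam n A (Rop' n st ψ) := by
  rcases lo_or_hi A with ⟨i, rfl⟩ | ⟨i, rfl⟩
  · have hnm : ∀ B ∈ (List.finRange n).map hi, B ≠ lo i := by
      intro B hB
      obtain ⟨j, -, rfl⟩ := List.mem_map.mp hB
      exact (lo_ne_hi i j).symm
    rw [Rop'_eq, st_Gam_lo hst, ← Module.End.mul_apply,
      prodGam_mul_of_not_mem _ hnm, hiL_length, LinearMap.smul_apply,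
      Module.End.mul_apply, Rop'_eq]
  · rw [Rop'_eq, st_Gam_hi hst, map_neg, ← Module.End.mul_apply,
      prodGam_mul_of_mem _ hiL_nodup (List.mem_map_of_mem (f := hi) (List.mem_finRange i)),
      hiL_length, LinearMap.smul_apply, Module.End.mul_apply, ← Rop'_eq (st := st),
      neg_smul, neg_neg]

include hst in
lemma Rop_one : Rop n st 1 = basisMonomial n (List.finRange n) := by
  rw [Rop, st_one hst]
  show ((List.finRange n).map fun i => Gam n (lo i)).prod 1 = _
  exact GamLo_prod_one _ (List.nodup_finRange n)

include hst in
lemma Rop'_one : Rop' n st 1 = (Complex.I ^ n) • basisMonomial n (List.finRange n) := by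
  rw [Rop', st_one hst]
  show ((List.finRange n).map fun i => Gam n (hi i)).prod 1 = _
  rw [GamHi_prod_one _ (List.nodup_finRange n), List.length_finRange]

end RopFacts


/-- Up to a complex scalar, `R` and `R'` are the only reality conditions: any nonzero
`ℂ`-antilinear map `T` on polyforms that commutes or anticommutes with all the `Γ_A`
is a complex multiple of `R` or of `R'`. -/
theorem reality_conditions_unique (n : ℕ) (hn : 1 ≤ n) (st : Polyform n → Polyform n)
    (hst : IsConjugation n st) (T : Polyform n → Polyform n)
    (hTadd : ∀ x y, T (x + y) = T x + T y)
    (hTsmul : ∀ (z : ℂ) (x : Polyform n), T (z • x) = (starRingEnd ℂ) z • T x)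
    (hT0 : T ≠ 0) (ε : ℝ) (hε : ε = 1 ∨ ε = -1)
    (hTΓ : ∀ (A : Fin (2 * n)) (ψ : Polyform n),
      T (Gam n A ψ) = (ε : ℂ) • Gam n A (T ψ)) :
    ∃ z : ℂ, T = (fun ψ => z • Rop n st ψ) ∨ T = (fun ψ => z • Rop' n st ψ) := by
  have he0 : ((ε : ℂ)) ≠ 0 := by rcases hε with h | h <;> simp [h]
  have hTc : ∀ (i : Fin n) (ψ : Polyform n), T (crea n i ψ) = (ε:ℂ) • anni n i (T ψ) :=
    fun i ψ => (derive_cd T hTadd hTsmul (ε:ℂ) hTΓ i ψ).1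
  have hTd : ∀ (i : Fin n) (ψ : Polyform n), T (anni n i ψ) = (ε:ℂ) • crea n i (T ψ) :=
    fun i ψ => (derive_cd T hTadd hTsmul (ε:ℂ) hTΓ i ψ).2
  have hT0' : T 0 = 0 := anti_zero T hTadd
  have hc1 : ∀ i : Fin n, crea n i (T 1) = 0 := by
    intro i
    have h := hTd i 1
    rw [anni_one, hT0'] at h
    rcases smul_eq_zero.mp h.symm with h' | h'
    · exact absurd h' he0
    · exact h'
  obtain ⟨z₀, hz₀⟩ : ∃ z₀ : ℂ, T 1 = z₀ • basisMonomial n (List.finRange n) := by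
    have hrec := ker_reconstruct (List.finRange n) (List.nodup_finRange n) (T 1)
      (fun i _ => hc1 i)
    obtain ⟨z₀, hz⟩ := range_topline ((((List.finRange n).reverse.map (anni n)).prod) (T 1))
    exact ⟨z₀, by rw [hrec, hz]⟩
  by_cases hsign : ((ε:ℂ)) = -(-1:ℂ)^n
  · refine ⟨z₀, Or.inl ?_⟩
    set T' : Polyform n → Polyform n := fun ψ => z₀ • Rop n st ψ with hT'
    have hadd' : ∀ x y, T' (x + y) = T' x + T' y := by
      intro x y
      show z₀ • Rop n st (x + y) = z₀ • Rop n st x + z₀ • Rop n st y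
      rw [Rop_add hst, smul_add]
    have hsmul' : ∀ (z : ℂ) (x : Polyform n), T' (z • x) = (starRingEnd ℂ) z • T' x := by
      intro z x
      show z₀ • Rop n st (z • x) = (starRingEnd ℂ) z • (z₀ • Rop n st x)
      rw [Rop_smul hst, smul_comm]
    have hG' : ∀ (A : Fin (2*n)) (ψ : Polyform n),
        T' (Gam n A ψ) = (ε:ℂ) • Gam n A (T' ψ) := by
      intro A ψ
      show z₀ • Rop n st (Gam n A ψ) = (ε:ℂ) • Gam n A (z₀ • Rop n st ψ)
      rw [Rop_Gam hst, map_smul, smul_comm, hsign]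
    have hc' : ∀ (i : Fin n) (ψ : Polyform n), T' (crea n i ψ) = (ε:ℂ) • anni n i (T' ψ) :=
      fun i ψ => (derive_cd T' hadd' hsmul' (ε:ℂ) hG' i ψ).1
    apply anti_ext T T' hTadd hTsmul hadd' hsmul'
    intro l
    rw [keyA T hTadd hTsmul _ hTc l, keyA T' hadd' hsmul' _ hc' l]
    have hT'1 : T' 1 = T 1 := by
      show z₀ • Rop n st 1 = T 1
      rw [Rop_one hst, hz₀]
    rw [hT'1]
  · have hsign' : ((ε:ℂ)) = (-1:ℂ)^n := by
      rcases Nat.even_or_odd n with hm | hm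
      · rw [hm.neg_one_pow] at hsign ⊢
        rcases hε with h | h
        · rw [h]; norm_num
        · exfalso; apply hsign; rw [h]; norm_num
      · rw [hm.neg_one_pow] at hsign ⊢
        rcases hε with h | h
        · exfalso; apply hsign; rw [h]; norm_num
        · rw [h]; norm_num
    refine ⟨z₀ * (-Complex.I)^n, Or.inr ?_⟩
    set T' : Polyform n → Polyform n := fun ψ => (z₀ * (-Complex.I)^n) • Rop' n st ψ with hT'
    have hadd' : ∀ x y, T' (x + y) = T' x + T' y := by
      intro x y
      show (z₀ * (-Complex.I)^n) • Rop' n st (x + y)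
        = (z₀ * (-Complex.I)^n) • Rop' n st x + (z₀ * (-Complex.I)^n) • Rop' n st y
      rw [Rop'_add hst, smul_add]
    have hsmul' : ∀ (z : ℂ) (x : Polyform n), T' (z • x) = (starRingEnd ℂ) z • T' x := by
      intro z x
      show (z₀ * (-Complex.I)^n) • Rop' n st (z • x)
        = (starRingEnd ℂ) z • ((z₀ * (-Complex.I)^n) • Rop' n st x)
      rw [Rop'_smul hst, smul_comm]
    have hG' : ∀ (A : Fin (2*n)) (ψ : Polyform n),
        T' (Gam n A ψ) = (ε:ℂ) • Gam n A (T' ψ) := by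
      intro A ψ
      show (z₀ * (-Complex.I)^n) • Rop' n st (Gam n A ψ)
        = (ε:ℂ) • Gam n A ((z₀ * (-Complex.I)^n) • Rop' n st ψ)
      rw [Rop'_Gam hst, map_smul, smul_comm, hsign']
    have hc' : ∀ (i : Fin n) (ψ : Polyform n), T' (crea n i ψ) = (ε:ℂ) • anni n i (T' ψ) :=
      fun i ψ => (derive_cd T' hadd' hsmul' (ε:ℂ) hG' i ψ).1
    apply anti_ext T T' hTadd hTsmul hadd' hsmul'
    intro l
    rw [keyA T hTadd hTsmul _ hTc l, keyA T' hadd' hsmul' _ hc' l]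
    have hT'1 : T' 1 = T 1 := by
      show (z₀ * (-Complex.I)^n) • Rop' n st 1 = T 1
      rw [Rop'_one hst, hz₀, smul_smul, mul_assoc, ← mul_pow]
      norm_num [Complex.I_mul_I]
    rw [hT'1]
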